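/- Let u_n satisfy u_n = u_{n-1} + ... + u_{n-k} with initial values u_n = 2^n for 0 ≤ n ≤ k-1, and let ζ₀,…,ζ_{k-1} be the distinct roots of x^k - x^{k-1} - ... - 1. Then for all n ≥ 0, u_n = ∑_{j=0}^{k-1} (ζ_j(ζ_j - 1)/((k+1)ζ_j - 2k)) · ζ_j^n. -/

import Mathlib

open Finset Polynomial

section aux
variable {k : ℕ} (hk : 2 ≤ k) (ζ : Fin k → ℂ)

-- leading coeff of Lagrange basis
lemma lead_basis {F : Type*} [Field F] {ι : Type*} [DecidableEq ι] (s : Finset ι) (v : ι → F)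
    (hvs : Set.InjOn v s) {i : ι} (hi : i ∈ s) :
    (Lagrange.basis s v i).coeff (#s - 1) = Lagrange.nodalWeight s v i := by
  have h1 : (Lagrange.basis s v i).natDegree = #s - 1 := Lagrange.natDegree_basis hvs hi
  rw [← h1, ← Polynomial.leadingCoeff, Lagrange.basis, Polynomial.leadingCoeff_prod,
    Lagrange.nodalWeight]
  refine prod_congr rfl fun j hj => ?_
  rcases mem_erase.mp hj with ⟨hij, hjs⟩
  rw [Lagrange.basisDivisor, leadingCoeff_mul, leadingCoeff_C, (monic_X_sub_C _).leadingCoeff,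
    mul_one]

lemma coeff_eq_sum (hinj : Function.Injective ζ) (f : ℂ[X])
    (hdeg : f.degree < (k : ℕ)) :
    f.coeff (k - 1) = ∑ j : Fin k, f.eval (ζ j) * Lagrange.nodalWeight univ ζ j := by
  have hvs : Set.InjOn ζ (univ : Finset (Fin k)) := hinj.injOn
  have hcard : #(univ : Finset (Fin k)) = k := by simp
  have := Lagrange.eq_interpolate hvs (by rw [hcard]; exact hdeg)
  conv_lhs => rw [this, Lagrange.interpolate_apply, finset_sum_coeff]
  refine sum_congr rfl fun j _ => ?_
  rw [coeff_C_mul]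
  congr 1
  rw [← lead_basis _ _ hvs (mem_univ j), hcard]
end aux

section main
variable {k : ℕ} {ζ : Fin k → ℂ}

noncomputable def pp (k : ℕ) : ℂ[X] := X ^ k - ∑ i ∈ range k, X ^ i

lemma degree_gsum (hk : 1 ≤ k) : (∑ i ∈ range k, (X : ℂ[X]) ^ i).degree < (k : ℕ) := by
  refine lt_of_le_of_lt (degree_sum_le _ _) ?_
  rw [Finset.sup_lt_iff (by exact_mod_cast WithBot.bot_lt_coe k)]
  intro i hi
  rw [degree_X_pow]
  exact_mod_cast mem_range.mp hi

lemma pp_monic (hk : 1 ≤ k) : (pp k).Monic := by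
  have h := degree_gsum hk
  have hd : (∑ i ∈ range k, (X : ℂ[X]) ^ i).degree < ((X : ℂ[X]) ^ k).degree := by
    rwa [degree_X_pow]
  unfold pp
  unfold Monic
  rw [leadingCoeff, natDegree_sub_eq_left_of_natDegree_lt]
  · have : (∑ i ∈ range k, (X : ℂ[X]) ^ i).coeff ((X:ℂ[X])^k).natDegree = 0 := by
      rw [natDegree_X_pow]; exact coeff_eq_zero_of_degree_lt h
    rw [coeff_sub, this, natDegree_X_pow, coeff_X_pow, if_pos rfl]; ring
  · calc (∑ i ∈ range k, (X : ℂ[X]) ^ i).natDegree ≤ k - 1 := by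
          refine natDegree_le_iff_degree_le.2 ?_
          refine degree_le_iff_coeff_zero _ _ |>.2 fun m hm => ?_
          refine coeff_eq_zero_of_degree_lt (lt_of_lt_of_le h ?_)
          exact_mod_cast Nat.cast_le.2 (by
            have : (k:ℕ) - 1 < m := by exact_mod_cast WithBot.coe_lt_coe.mp (by exact_mod_cast hm)
            omega)
       _ < ((X : ℂ[X]) ^ k).natDegree := by rw [natDegree_X_pow]; omega

lemma pp_degree (hk : 1 ≤ k) : (pp k).degree = (k : ℕ) := by
  unfold pp
  rw [degree_sub_eq_left_of_degree_lt (by rw [degree_X_pow]; exact degree_gsum hk), degree_X_pow]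

lemma pp_eval (z : ℂ) : (pp k).eval z = z ^ k - ∑ i ∈ range k, z ^ i := by
  simp [pp, eval_finset_sum]

lemma pp_eq_nodal (hk : 1 ≤ k) (hroot : ∀ j, (ζ j) ^ k = ∑ i ∈ range k, (ζ j) ^ i)
    (hinj : Function.Injective ζ) :
    pp k = Lagrange.nodal (univ : Finset (Fin k)) ζ := by
  have hcard : #(univ : Finset (Fin k)) = k := by simp
  have hm1 := pp_monic hk
  have hm2 : (Lagrange.nodal (univ : Finset (Fin k)) ζ).Monic := Lagrange.nodal_monic
  refine Polynomial.eq_of_degree_sub_lt_of_eval_index_eq univ hinj.injOn ?_ ?_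
  · have hdd : (pp k).degree = (Lagrange.nodal (univ : Finset (Fin k)) ζ).degree := by
      rw [pp_degree hk, Lagrange.degree_nodal, hcard]
    have := Polynomial.degree_sub_lt hdd hm1.ne_zero (by rw [hm1.leadingCoeff, hm2.leadingCoeff])
    rw [hcard]; rwa [pp_degree hk] at this
  · intro i _
    rw [pp_eval, Lagrange.eval_nodal_at_node (mem_univ i)]
    rw [hroot i]; ring

lemma gsum_coeff {i : ℕ} (hi : i < k) : (∑ m ∈ range k, (X : ℂ[X]) ^ m).coeff i = 1 := by
  rw [finset_sum_coeff]
  simp only [coeff_X_pow]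
  rw [Finset.sum_ite_eq (range k) i (fun _ => (1:ℂ))]
  simp [mem_range.mpr hi]

lemma key_identity (hk : 2 ≤ k) (hroot : ∀ j, (ζ j) ^ k = ∑ i ∈ range k, (ζ j) ^ i)
    (hinj : Function.Injective ζ) (j : Fin k) :
    (ζ j - 1) * (∏ i ∈ univ.erase j, (ζ j - ζ i))
      = ζ j ^ (k - 1) * ((k + 1) * ζ j - 2 * k) := by
  have hk1 : 1 ≤ k := by omega
  set q : ℂ[X] := Lagrange.nodal ((univ : Finset (Fin k)).erase j) ζ with hq
  have hpq : pp k = (X - C (ζ j)) * q :=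
    (pp_eq_nodal hk1 hroot hinj).trans (Lagrange.nodal_eq_mul_nodal_erase (mem_univ j))
  have hg : (X - C (ζ j)) * ((X - 1) * q) = X ^ (k + 1) - 2 * X ^ k + 1 := by
    have h2 : ((X:ℂ[X]) - 1) * pp k = X ^ (k + 1) - 2 * X ^ k + 1 := by
      unfold pp
      have h := geom_sum_mul (X : ℂ[X]) k
      linear_combination -h
    rw [← h2, hpq]; ring
  have hder := congrArg (fun f => Polynomial.eval (ζ j) (Polynomial.derivative f)) hg
  simp only [derivative_mul, derivative_sub, derivative_add, derivative_one, derivative_X,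
    derivative_X_pow, derivative_C, derivative_ofNat, eval_add, eval_sub, eval_mul, eval_pow,
    eval_X, eval_C, eval_one, eval_natCast, eval_ofNat, sub_self, zero_mul, mul_zero, add_zero,
    zero_add, one_mul, mul_one, eval_zero, sub_zero] at hder
  rw [hq, Lagrange.eval_nodal] at hder
  push_cast at hder
  -- hder : (ζ j - 1) * ∏ ... = (k+1) * ζ j ^ k - 2 * (k * ζ j ^ (k-1))
  rw [hder]
  have : ζ j ^ k = ζ j ^ (k - 1) * ζ j := by
    rw [← pow_succ]; congr 1; omega
  rw [this]; ring

lemma zeta_ne_zero (hk : 2 ≤ k) (hroot : ∀ j, (ζ j) ^ k = ∑ i ∈ range k, (ζ j) ^ i)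
    (j : Fin k) : ζ j ≠ 0 := by
  intro h0
  have := hroot j
  rw [h0, zero_pow (by omega)] at this
  have h1 : ∑ i ∈ range k, (0:ℂ) ^ i = 1 := by
    rw [Finset.sum_eq_single 0]
    · simp
    · intro b _ hb; exact zero_pow hb
    · intro h; exact absurd (mem_range.mpr (by omega)) h
  rw [h1] at this; exact one_ne_zero this.symm

lemma zeta_ne_one (hk : 2 ≤ k) (hroot : ∀ j, (ζ j) ^ k = ∑ i ∈ range k, (ζ j) ^ i)
    (j : Fin k) : ζ j ≠ 1 := by
  intro h1
  have := hroot j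
  rw [h1] at this
  simp at this
  have : (k : ℂ) = 1 := this.symm
  have : (k : ℕ) = 1 := by exact_mod_cast this
  omega

lemma prod_ne_zero' (hinj : Function.Injective ζ) (j : Fin k) :
    (∏ i ∈ univ.erase j, (ζ j - ζ i)) ≠ 0 := by
  rw [Finset.prod_ne_zero_iff]
  intro i hi
  rw [sub_ne_zero]
  exact fun h => (mem_erase.mp hi).1 (hinj h.symm)

lemma denom_ne_zero (hk : 2 ≤ k) (hroot : ∀ j, (ζ j) ^ k = ∑ i ∈ range k, (ζ j) ^ i)
    (hinj : Function.Injective ζ) (j : Fin k) :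
    ((k : ℂ) + 1) * ζ j - 2 * k ≠ 0 := by
  intro h
  have hki := key_identity hk hroot hinj j
  rw [h, mul_zero] at hki
  have := mul_ne_zero (sub_ne_zero.mpr (zeta_ne_one hk hroot j)) (prod_ne_zero' hinj j)
  exact this hki

lemma coef_eq (hk : 2 ≤ k) (hroot : ∀ j, (ζ j) ^ k = ∑ i ∈ range k, (ζ j) ^ i)
    (hinj : Function.Injective ζ) (j : Fin k) :
    ζ j * (ζ j - 1) / (((k:ℂ) + 1) * ζ j - 2 * k)
      = ζ j ^ k * Lagrange.nodalWeight univ ζ j := by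
  have hki := key_identity hk hroot hinj j
  have hD := prod_ne_zero' hinj j
  have hden := denom_ne_zero hk hroot hinj j
  have hz := zeta_ne_zero hk hroot j
  rw [Lagrange.nodalWeight, Finset.prod_inv_distrib]
  have hzk : ζ j ^ k = ζ j ^ (k - 1) * ζ j := by
    rw [← pow_succ]; congr 1; omega
  rw [hzk, div_eq_iff hden]
  field_simp
  linear_combination hki

lemma pp_coeff_lt (hk : 2 ≤ k) {i : ℕ} (hi : i < k) : (pp k).coeff i = -1 := by
  unfold pp
  rw [coeff_sub, coeff_X_pow, if_neg (by omega), gsum_coeff hi]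
  ring

lemma pp_coeff_k (hk : 2 ≤ k) : (pp k).coeff k = 1 := by
  unfold pp
  rw [coeff_sub, coeff_X_pow, if_pos rfl,
    coeff_eq_zero_of_degree_lt (degree_gsum (by omega))]
  ring

lemma rem_base (hk : 2 ≤ k) : (X : ℂ[X]) ^ k %ₘ pp k = ∑ m ∈ range k, X ^ m := by
  have hmon := pp_monic (k := k) (by omega)
  have h1 : (X : ℂ[X]) ^ k %ₘ pp k = (∑ m ∈ range k, X ^ m) %ₘ pp k := by
    refine Polynomial.modByMonic_eq_of_dvd_sub hmon ?_
    exact ⟨1, by unfold pp; ring⟩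
  rw [h1, Polynomial.modByMonic_eq_self_iff hmon |>.mpr]
  rw [pp_degree (by omega)]
  exact degree_gsum (by omega)

lemma rem_degree (hk : 2 ≤ k) (m : ℕ) : ((X : ℂ[X]) ^ m %ₘ pp k).degree < (k : ℕ) := by
  have := Polynomial.degree_modByMonic_lt ((X : ℂ[X]) ^ m) (pp_monic (k := k) (by omega))
  rwa [pp_degree (by omega)] at this

lemma rem_step (hk : 2 ≤ k) (n : ℕ) :
    (X : ℂ[X]) ^ (n + 1 + k) %ₘ pp k
      = X * ((X : ℂ[X]) ^ (n + k) %ₘ pp k)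
        - C (((X : ℂ[X]) ^ (n + k) %ₘ pp k).coeff (k - 1)) * pp k := by
  have hmon := pp_monic (k := k) (by omega)
  set r : ℂ[X] := (X : ℂ[X]) ^ (n + k) %ₘ pp k with hr
  set a : ℂ := r.coeff (k - 1) with ha
  set s : ℂ[X] := X * r - C a * pp k with hs
  have hrdeg : r.degree < (k : ℕ) := rem_degree hk (n + k)
  have hsdeg : s.degree < (k : ℕ) := by
    rw [Polynomial.degree_lt_iff_coeff_zero]
    intro m hm
    have hm' : (k : ℕ) ≤ m := by exact_mod_cast hm
    rw [hs, coeff_sub, coeff_C_mul]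
    rcases eq_or_lt_of_le hm' with h | h
    · have hm1 : m = (k - 1) + 1 := by omega
      have hk1 : (k - 1) + 1 = k := by omega
      rw [hm1, coeff_X_mul, hk1, pp_coeff_k hk, ← ha, mul_one, sub_self]
    · have hm1 : m = (m - 1) + 1 := by omega
      have hr0 : r.coeff (m - 1) = 0 := by
        refine Polynomial.coeff_eq_zero_of_degree_lt (lt_of_lt_of_le hrdeg ?_)
        exact_mod_cast (by omega : k ≤ m - 1)
      have hp0 : (pp k).coeff ((m - 1) + 1) = 0 := by
        refine Polynomial.coeff_eq_zero_of_degree_lt ?_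
        rw [pp_degree (by omega : 1 ≤ k)]
        exact_mod_cast (by omega : k < (m - 1) + 1)
      rw [hm1, coeff_X_mul, hr0, hp0, mul_zero, sub_zero]
  have hdvd : pp k ∣ (X : ℂ[X]) ^ (n + 1 + k) - s := by
    have h1 : (X : ℂ[X]) ^ (n + k) - r = pp k * ((X : ℂ[X]) ^ (n + k) /ₘ pp k) := by
      have := Polynomial.modByMonic_add_div ((X : ℂ[X]) ^ (n + k)) (pp k)
      linear_combination -this
    refine ⟨X * ((X : ℂ[X]) ^ (n + k) /ₘ pp k) + C a, ?_⟩
    have hpow : (X : ℂ[X]) ^ (n + 1 + k) = X * (X : ℂ[X]) ^ (n + k) := by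
      rw [← pow_succ']; congr 1; omega
    rw [hpow, hs]
    linear_combination X * h1
  calc (X : ℂ[X]) ^ (n + 1 + k) %ₘ pp k = s %ₘ pp k :=
        Polynomial.modByMonic_eq_of_dvd_sub hmon hdvd
    _ = s := by
        rw [Polynomial.modByMonic_eq_self_iff hmon |>.mpr]
        rw [pp_degree (by omega : 1 ≤ k)]
        exact hsdeg

lemma rem_coeff (hk : 2 ≤ k) : ∀ n, n < k → ∀ i, n ≤ i → i < k →
    ((X : ℂ[X]) ^ (n + k) %ₘ pp k).coeff i = 2 ^ n := by
  intro n
  induction n with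
  | zero =>
    intro _ i _ hik
    rw [zero_add, rem_base hk, gsum_coeff hik, pow_zero]
  | succ n ih =>
    intro hn i hni hik
    have hn' : n < k := by omega
    have ha : ((X : ℂ[X]) ^ (n + k) %ₘ pp k).coeff (k - 1) = 2 ^ n :=
      ih hn' (k - 1) (by omega) (by omega)
    rw [rem_step hk n, coeff_sub, coeff_C_mul, ha]
    have hi1 : i = (i - 1) + 1 := by omega
    rw [hi1, coeff_X_mul, pp_coeff_lt hk (by omega), ih hn' (i - 1) (by omega) (by omega)]
    ring

lemma rem_eval (hk : 2 ≤ k) (hroot : ∀ j, (ζ j) ^ k = ∑ i ∈ range k, (ζ j) ^ i)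
    (m : ℕ) (j : Fin k) :
    eval (ζ j) ((X : ℂ[X]) ^ m %ₘ pp k) = ζ j ^ m := by
  have hd := Polynomial.modByMonic_add_div ((X : ℂ[X]) ^ m) (pp k)
  have hz : (pp k).eval (ζ j) = 0 := by rw [pp_eval, hroot j, sub_self]
  have h := congrArg (eval (ζ j)) hd
  rw [eval_add, eval_mul, hz, zero_mul, add_zero, eval_pow, eval_X] at h
  exact h

lemma root_rec (hroot : ∀ j, (ζ j) ^ k = ∑ i ∈ range k, (ζ j) ^ i)
    (j : Fin k) {n : ℕ} (hn : k ≤ n) :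
    ζ j ^ n = ∑ m ∈ range k, ζ j ^ (n - (m + 1)) := by
  have h1 : ζ j ^ n = ζ j ^ (n - k) * ζ j ^ k := by rw [← pow_add]; congr 1; omega
  rw [h1, hroot j, Finset.mul_sum,
    ← Finset.sum_range_reflect (fun m => ζ j ^ (n - (m + 1))) k]
  refine sum_congr rfl fun m hm => ?_
  have hmk := mem_range.mp hm
  rw [← pow_add]
  congr 1
  omega

end main

open Finset

theorem stmt_17 (k : ℕ) (hk : 2 ≤ k) (ζ : Fin k → ℂ)
    (hroot : ∀ j, (ζ j) ^ k = ∑ i ∈ range k, (ζ j) ^ i)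
    (hinj : Function.Injective ζ)
    (u : ℕ → ℂ)
    (hinit : ∀ n < k, u n = 2 ^ n)
    (hrec : ∀ n, k ≤ n → u n = ∑ j ∈ range k, u (n - (j + 1)))
    (n : ℕ) :
    u n = ∑ j : Fin k, (ζ j * (ζ j - 1) / ((k + 1) * ζ j - 2 * k)) * (ζ j) ^ n := by
  induction n using Nat.strong_induction_on with
  | _ n IH =>
  by_cases hn : n < k
  · rw [hinit n hn]
    have key : ∀ j : Fin k, ζ j * (ζ j - 1) / (((k : ℂ) + 1) * ζ j - 2 * k) * ζ j ^ n
        = eval (ζ j) ((X : ℂ[X]) ^ (n + k) %ₘ pp k) * Lagrange.nodalWeight univ ζ j := by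
      intro j
      rw [rem_eval hk hroot (n + k) j, coef_eq hk hroot hinj j, pow_add]
      ring
    rw [Finset.sum_congr rfl (fun j _ => key j),
      ← coeff_eq_sum ζ hinj _ (rem_degree hk (n + k)),
      rem_coeff hk n hn (k - 1) (by omega) (by omega)]
  · push_neg at hn
    rw [hrec n hn]
    have h1 : ∀ m ∈ range k, u (n - (m + 1))
        = ∑ j : Fin k, (ζ j * (ζ j - 1) / (((k : ℂ) + 1) * ζ j - 2 * k)) * ζ j ^ (n - (m + 1)) :=
      fun m _ => IH _ (by omega)
    rw [Finset.sum_congr rfl h1, Finset.sum_comm]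
    refine sum_congr rfl fun j _ => ?_
    rw [← Finset.mul_sum, ← root_rec hroot j hn]
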